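/- Let |ψ⟩ be a unit vector in ℂ²⊗ℂ²⊗ℂ² with real coefficients. Then the maximum of the CHSH value ⟨𝓑_AB⟩ over real traceless ±1-observables A₁, A₂, B₁, B₂ (acting on qubits A and B, identity on C) equals 2√(1 + ⟨Y_A Y_B⟩² − ⟨Y_A Y_C⟩² − ⟨Y_B Y_C⟩²). -/

import Mathlib

open Matrix Kronecker

noncomputable section

def PX : Matrix (Fin 2) (Fin 2) ℂ := !![0, 1; 1, 0]
def PY : Matrix (Fin 2) (Fin 2) ℂ := !![0, -Complex.I; Complex.I, 0]
def PZ : Matrix (Fin 2) (Fin 2) ℂ := !![1, 0; 0, -1]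

/-- A real traceless ±1-observable on ℂ²: cos θ Z + sin θ X. -/
def obs (θ : ℝ) : Matrix (Fin 2) (Fin 2) ℂ :=
  (Real.cos θ : ℂ) • PZ + (Real.sin θ : ℂ) • PX

/- Auxiliary definitions: correlation entries of a real 3-qubit vector. -/
def cT1 (f : Fin 2 × Fin 2 × Fin 2 → ℝ) : ℝ :=
  f (0,0,0)^2 + f (0,0,1)^2 - f (0,1,0)^2 - f (0,1,1)^2
  - f (1,0,0)^2 - f (1,0,1)^2 + f (1,1,0)^2 + f (1,1,1)^2
def cT2 (f : Fin 2 × Fin 2 × Fin 2 → ℝ) : ℝ :=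
  2 * (f (0,0,0)*f (0,1,0) + f (0,0,1)*f (0,1,1) - f (1,0,0)*f (1,1,0) - f (1,0,1)*f (1,1,1))
def cT3 (f : Fin 2 × Fin 2 × Fin 2 → ℝ) : ℝ :=
  2 * (f (0,0,0)*f (1,0,0) + f (0,0,1)*f (1,0,1) - f (0,1,0)*f (1,1,0) - f (0,1,1)*f (1,1,1))
def cT4 (f : Fin 2 × Fin 2 × Fin 2 → ℝ) : ℝ :=
  2 * (f (0,0,0)*f (1,1,0) + f (0,0,1)*f (1,1,1) + f (0,1,0)*f (1,0,0) + f (0,1,1)*f (1,0,1))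
def eAB (f : Fin 2 × Fin 2 × Fin 2 → ℝ) : ℝ :=
  2 * (- f (0,0,0)*f (1,1,0) - f (0,0,1)*f (1,1,1) + f (0,1,0)*f (1,0,0) + f (0,1,1)*f (1,0,1))
def eAC (f : Fin 2 × Fin 2 × Fin 2 → ℝ) : ℝ :=
  2 * (- f (0,0,0)*f (1,0,1) + f (0,0,1)*f (1,0,0) - f (0,1,0)*f (1,1,1) + f (0,1,1)*f (1,1,0))
def eBC (f : Fin 2 × Fin 2 × Fin 2 → ℝ) : ℝ :=
  2 * (- f (0,0,0)*f (0,1,1) + f (0,0,1)*f (0,1,0) - f (1,0,0)*f (1,1,1) + f (1,0,1)*f (1,1,0))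
def nrm2 (f : Fin 2 × Fin 2 × Fin 2 → ℝ) : ℝ :=
  f (0,0,0)^2 + f (0,0,1)^2 + f (0,1,0)^2 + f (0,1,1)^2
  + f (1,0,0)^2 + f (1,0,1)^2 + f (1,1,0)^2 + f (1,1,1)^2

lemma key_identity (f : Fin 2 × Fin 2 × Fin 2 → ℝ) :
    cT1 f^2 + cT2 f^2 + cT3 f^2 + cT4 f^2
      = nrm2 f^2 + eAB f^2 - eAC f^2 - eBC f^2 := by
  simp only [cT1, cT2, cT3, cT4, eAB, eAC, eBC, nrm2]; ring

lemma dot_self_eq (f : Fin 2 × Fin 2 × Fin 2 → ℝ) :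
    (star (fun i => (f i : ℂ)) ⬝ᵥ fun i => (f i : ℂ)) = ((nrm2 f : ℝ) : ℂ) := by
  simp [dotProduct, Fintype.sum_prod_type, Fin.sum_univ_two, nrm2]
  ring

lemma yy1_eq (f : Fin 2 × Fin 2 × Fin 2 → ℝ) :
    (star (fun i => (f i : ℂ)) ⬝ᵥ ((PY ⊗ₖ (PY ⊗ₖ (1 : Matrix (Fin 2) (Fin 2) ℂ))) *ᵥ
      fun i => (f i : ℂ))) = ((eAB f : ℝ) : ℂ) := by
  simp [dotProduct, mulVec, Fintype.sum_prod_type, Fin.sum_univ_two, PY,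
    Matrix.one_apply, kroneckerMap_apply, eAB]
  ring_nf

lemma y1y_eq (f : Fin 2 × Fin 2 × Fin 2 → ℝ) :
    (star (fun i => (f i : ℂ)) ⬝ᵥ ((PY ⊗ₖ ((1 : Matrix (Fin 2) (Fin 2) ℂ) ⊗ₖ PY)) *ᵥ
      fun i => (f i : ℂ))) = ((eAC f : ℝ) : ℂ) := by
  simp [dotProduct, mulVec, Fintype.sum_prod_type, Fin.sum_univ_two, PY,
    Matrix.one_apply, kroneckerMap_apply, eAC]
  ring_nf

lemma one_yy_eq (f : Fin 2 × Fin 2 × Fin 2 → ℝ) :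
    (star (fun i => (f i : ℂ)) ⬝ᵥ (((1 : Matrix (Fin 2) (Fin 2) ℂ) ⊗ₖ (PY ⊗ₖ PY)) *ᵥ
      fun i => (f i : ℂ))) = ((eBC f : ℝ) : ℂ) := by
  simp [dotProduct, mulVec, Fintype.sum_prod_type, Fin.sum_univ_two, PY,
    Matrix.one_apply, kroneckerMap_apply, eBC]
  ring_nf

lemma chsh_val_eq (f : Fin 2 × Fin 2 × Fin 2 → ℝ) (α₁ α₂ β₁ β₂ : ℝ) :
    (star (fun i => (f i : ℂ)) ⬝ᵥ ((obs α₁ ⊗ₖ ((obs β₁ + obs β₂) ⊗ₖ (1 : Matrix (Fin 2) (Fin 2) ℂ)) +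
        obs α₂ ⊗ₖ ((obs β₁ - obs β₂) ⊗ₖ (1 : Matrix (Fin 2) (Fin 2) ℂ))) *ᵥ fun i => (f i : ℂ)))
    = ((Real.cos α₁ * ((Real.cos β₁ + Real.cos β₂) * cT1 f + (Real.sin β₁ + Real.sin β₂) * cT2 f)
      + Real.sin α₁ * ((Real.cos β₁ + Real.cos β₂) * cT3 f + (Real.sin β₁ + Real.sin β₂) * cT4 f)
      + Real.cos α₂ * ((Real.cos β₁ - Real.cos β₂) * cT1 f + (Real.sin β₁ - Real.sin β₂) * cT2 f)
      + Real.sin α₂ * ((Real.cos β₁ - Real.cos β₂) * cT3 f + (Real.sin β₁ - Real.sin β₂) * cT4 f) : ℝ) : ℂ) := by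
  simp [dotProduct, mulVec, Fintype.sum_prod_type, Fin.sum_univ_two, obs, PX, PZ,
    Matrix.one_apply, kroneckerMap_apply, Matrix.add_apply, Matrix.sub_apply, Matrix.smul_apply,
    cT1, cT2, cT3, cT4]
  ring

lemma exists_angle (x y : ℝ) (h : x^2 + y^2 = 1) :
    ∃ θ : ℝ, Real.cos θ = x ∧ Real.sin θ = y := by
  have hz : (⟨x, y⟩ : ℂ) ≠ 0 := by
    intro hc
    rw [Complex.ext_iff] at hc
    simp at hc
    nlinarith [hc.1, hc.2]
  have habs : ‖(⟨x, y⟩ : ℂ)‖ = 1 := by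
    rw [Complex.norm_def, Complex.normSq_mk]
    rw [show x*x + y*y = 1 by nlinarith]
    exact Real.sqrt_one
  refine ⟨Complex.arg ⟨x, y⟩, ?_, ?_⟩
  · rw [Complex.cos_arg hz, habs]; simp
  · rw [Complex.sin_arg, habs]; simp

lemma exists_angle_dir (x y : ℝ) :
    ∃ θ : ℝ, Real.cos θ * x + Real.sin θ * y = Real.sqrt (x^2 + y^2) := by
  rcases eq_or_lt_of_le (by positivity : (0:ℝ) ≤ x^2 + y^2) with h | h
  · refine ⟨0, ?_⟩
    have hx : x = 0 := by nlinarith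
    have hy : y = 0 := by nlinarith
    simp [hx, hy, ← h]
  · set r := Real.sqrt (x^2 + y^2) with hr
    have hrpos : 0 < r := Real.sqrt_pos.mpr h
    have hr2 : r^2 = x^2 + y^2 := Real.sq_sqrt h.le
    obtain ⟨θ, hc, hs⟩ := exists_angle (x/r) (y/r) (by field_simp; nlinarith)
    exact ⟨θ, by rw [hc, hs]; field_simp; nlinarith⟩

/-- Cauchy–Schwarz in the plane. -/
lemma plane_cs (a b p q : ℝ) (h : a^2 + b^2 = 1) :
    a * p + b * q ≤ Real.sqrt (p^2 + q^2) := by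
  calc a * p + b * q ≤ |a * p + b * q| := le_abs_self _
    _ = Real.sqrt ((a * p + b * q)^2) := (Real.sqrt_sq_eq_abs _).symm
    _ ≤ Real.sqrt (p^2 + q^2) := Real.sqrt_le_sqrt (by nlinarith [sq_nonneg (a*q - b*p)])

/-- The CHSH upper bound as a pure real inequality. -/
lemma chsh_bound (t1 t2 t3 t4 α₁ α₂ β₁ β₂ : ℝ) :
    Real.cos α₁ * ((Real.cos β₁ + Real.cos β₂) * t1 + (Real.sin β₁ + Real.sin β₂) * t2)
      + Real.sin α₁ * ((Real.cos β₁ + Real.cos β₂) * t3 + (Real.sin β₁ + Real.sin β₂) * t4)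
      + Real.cos α₂ * ((Real.cos β₁ - Real.cos β₂) * t1 + (Real.sin β₁ - Real.sin β₂) * t2)
      + Real.sin α₂ * ((Real.cos β₁ - Real.cos β₂) * t3 + (Real.sin β₁ - Real.sin β₂) * t4)
    ≤ 2 * Real.sqrt (t1^2 + t2^2 + t3^2 + t4^2) := by
  obtain ⟨μ, δ, rfl, rfl⟩ : ∃ μ δ : ℝ, β₁ = μ + δ ∧ β₂ = μ - δ :=
    ⟨(β₁ + β₂)/2, (β₁ - β₂)/2, by ring, by ring⟩
  rw [Real.sin_add, Real.sin_sub, Real.cos_add, Real.cos_sub]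
  set P := Real.cos α₁ * (Real.cos μ * t1 + Real.sin μ * t2)
         + Real.sin α₁ * (Real.cos μ * t3 + Real.sin μ * t4) with hP
  set Q := Real.cos α₂ * (- Real.sin μ * t1 + Real.cos μ * t2)
         + Real.sin α₂ * (- Real.sin μ * t3 + Real.cos μ * t4) with hQ
  have h5 : Real.cos δ * P + Real.sin δ * Q ≤ Real.sqrt (P^2 + Q^2) :=
    plane_cs _ _ _ _ (by nlinarith [Real.sin_sq_add_cos_sq δ])
  have hPQ : P^2 + Q^2 ≤ t1^2 + t2^2 + t3^2 + t4^2 := by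
    have i1 := Real.sin_sq_add_cos_sq α₁
    have i2 := Real.sin_sq_add_cos_sq α₂
    have i3 := Real.sin_sq_add_cos_sq μ
    have e1 : (Real.cos μ * t1 + Real.sin μ * t2)^2 + (Real.cos μ * t3 + Real.sin μ * t4)^2
        + (- Real.sin μ * t1 + Real.cos μ * t2)^2 + (- Real.sin μ * t3 + Real.cos μ * t4)^2
        = t1^2 + t2^2 + t3^2 + t4^2 := by
      linear_combination (t1^2 + t2^2 + t3^2 + t4^2) * i3
    have e2 : P^2 = (Real.cos μ * t1 + Real.sin μ * t2)^2 + (Real.cos μ * t3 + Real.sin μ * t4)^2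
        - (Real.cos α₁ * (Real.cos μ * t3 + Real.sin μ * t4)
          - Real.sin α₁ * (Real.cos μ * t1 + Real.sin μ * t2))^2 := by
      rw [hP]
      linear_combination ((Real.cos μ * t1 + Real.sin μ * t2)^2
        + (Real.cos μ * t3 + Real.sin μ * t4)^2) * i1
    have e3 : Q^2 = (- Real.sin μ * t1 + Real.cos μ * t2)^2 + (- Real.sin μ * t3 + Real.cos μ * t4)^2
        - (Real.cos α₂ * (- Real.sin μ * t3 + Real.cos μ * t4)
          - Real.sin α₂ * (- Real.sin μ * t1 + Real.cos μ * t2))^2 := by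
      rw [hQ]
      linear_combination ((- Real.sin μ * t1 + Real.cos μ * t2)^2
        + (- Real.sin μ * t3 + Real.cos μ * t4)^2) * i2
    have s1 := sq_nonneg (Real.cos α₁ * (Real.cos μ * t3 + Real.sin μ * t4)
      - Real.sin α₁ * (Real.cos μ * t1 + Real.sin μ * t2))
    have s2 := sq_nonneg (Real.cos α₂ * (- Real.sin μ * t3 + Real.cos μ * t4)
      - Real.sin α₂ * (- Real.sin μ * t1 + Real.cos μ * t2))
    linarith
  have h6 : Real.sqrt (P^2 + Q^2) ≤ Real.sqrt (t1^2 + t2^2 + t3^2 + t4^2) :=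
    Real.sqrt_le_sqrt hPQ
  calc Real.cos α₁ * ((Real.cos μ * Real.cos δ - Real.sin μ * Real.sin δ
          + (Real.cos μ * Real.cos δ + Real.sin μ * Real.sin δ)) * t1
        + (Real.sin μ * Real.cos δ + Real.cos μ * Real.sin δ
          + (Real.sin μ * Real.cos δ - Real.cos μ * Real.sin δ)) * t2)
      + Real.sin α₁ * ((Real.cos μ * Real.cos δ - Real.sin μ * Real.sin δ
          + (Real.cos μ * Real.cos δ + Real.sin μ * Real.sin δ)) * t3
        + (Real.sin μ * Real.cos δ + Real.cos μ * Real.sin δ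
          + (Real.sin μ * Real.cos δ - Real.cos μ * Real.sin δ)) * t4)
      + Real.cos α₂ * ((Real.cos μ * Real.cos δ - Real.sin μ * Real.sin δ
          - (Real.cos μ * Real.cos δ + Real.sin μ * Real.sin δ)) * t1
        + (Real.sin μ * Real.cos δ + Real.cos μ * Real.sin δ
          - (Real.sin μ * Real.cos δ - Real.cos μ * Real.sin δ)) * t2)
      + Real.sin α₂ * ((Real.cos μ * Real.cos δ - Real.sin μ * Real.sin δ
          - (Real.cos μ * Real.cos δ + Real.sin μ * Real.sin δ)) * t3
        + (Real.sin μ * Real.cos δ + Real.cos μ * Real.sin δ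
          - (Real.sin μ * Real.cos δ - Real.cos μ * Real.sin δ)) * t4)
      = 2 * (Real.cos δ * P + Real.sin δ * Q) := by rw [hP, hQ]; ring
    _ ≤ 2 * Real.sqrt (P^2 + Q^2) := by linarith
    _ ≤ 2 * Real.sqrt (t1^2 + t2^2 + t3^2 + t4^2) := by linarith

theorem chsh_max_real_state (ψ : Fin 2 × Fin 2 × Fin 2 → ℂ)
    (hreal : ∀ i, (ψ i).im = 0)
    (hunit : star ψ ⬝ᵥ ψ = 1) :
    IsGreatest
      {x : ℝ | ∃ α₁ α₂ β₁ β₂ : ℝ,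
        x = (star ψ ⬝ᵥ ((obs α₁ ⊗ₖ ((obs β₁ + obs β₂) ⊗ₖ (1 : Matrix (Fin 2) (Fin 2) ℂ)) +
                         obs α₂ ⊗ₖ ((obs β₁ - obs β₂) ⊗ₖ (1 : Matrix (Fin 2) (Fin 2) ℂ))) *ᵥ ψ)).re}
      (2 * Real.sqrt (1 +
        ((star ψ ⬝ᵥ ((PY ⊗ₖ (PY ⊗ₖ (1 : Matrix (Fin 2) (Fin 2) ℂ))) *ᵥ ψ)).re) ^ 2 -
        ((star ψ ⬝ᵥ ((PY ⊗ₖ ((1 : Matrix (Fin 2) (Fin 2) ℂ) ⊗ₖ PY)) *ᵥ ψ)).re) ^ 2 -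
        ((star ψ ⬝ᵥ (((1 : Matrix (Fin 2) (Fin 2) ℂ) ⊗ₖ (PY ⊗ₖ PY)) *ᵥ ψ)).re) ^ 2)) := by
  obtain ⟨f, rfl⟩ : ∃ f : Fin 2 × Fin 2 × Fin 2 → ℝ, ψ = fun i => (f i : ℂ) :=
    ⟨fun i => (ψ i).re, funext fun i => Complex.ext (by simp) (by simp [hreal i])⟩
  have hn : nrm2 f = 1 := by
    have h := hunit
    rw [dot_self_eq] at h
    exact_mod_cast h
  have h1 : ((star (fun i => (f i : ℂ)) ⬝ᵥ ((PY ⊗ₖ (PY ⊗ₖ (1 : Matrix (Fin 2) (Fin 2) ℂ))) *ᵥ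
      fun i => (f i : ℂ)))).re = eAB f := by rw [yy1_eq]; exact Complex.ofReal_re _
  have h2 : ((star (fun i => (f i : ℂ)) ⬝ᵥ ((PY ⊗ₖ ((1 : Matrix (Fin 2) (Fin 2) ℂ) ⊗ₖ PY)) *ᵥ
      fun i => (f i : ℂ)))).re = eAC f := by rw [y1y_eq]; exact Complex.ofReal_re _
  have h3 : ((star (fun i => (f i : ℂ)) ⬝ᵥ (((1 : Matrix (Fin 2) (Fin 2) ℂ) ⊗ₖ (PY ⊗ₖ PY)) *ᵥ
      fun i => (f i : ℂ)))).re = eBC f := by rw [one_yy_eq]; exact Complex.ofReal_re _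
  rw [h1, h2, h3]
  have hS : 1 + eAB f^2 - eAC f^2 - eBC f^2 = cT1 f^2 + cT2 f^2 + cT3 f^2 + cT4 f^2 := by
    have := key_identity f
    rw [hn] at this
    linarith
  rw [hS]
  constructor
  · -- membership: the maximum is attained
    obtain ⟨α₁, hα₁⟩ := exists_angle_dir (cT1 f) (cT3 f)
    obtain ⟨α₂, hα₂⟩ := exists_angle_dir (cT2 f) (cT4 f)
    obtain ⟨δ, hδ⟩ := exists_angle_dir (Real.sqrt (cT1 f^2 + cT3 f^2)) (Real.sqrt (cT2 f^2 + cT4 f^2))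
    refine ⟨α₁, α₂, δ, -δ, ?_⟩
    rw [chsh_val_eq, Complex.ofReal_re]
    have hp2 : Real.sqrt (cT1 f^2 + cT3 f^2)^2 = cT1 f^2 + cT3 f^2 := Real.sq_sqrt (by positivity)
    have hq2 : Real.sqrt (cT2 f^2 + cT4 f^2)^2 = cT2 f^2 + cT4 f^2 := Real.sq_sqrt (by positivity)
    rw [Real.cos_neg, Real.sin_neg]
    rw [show cT1 f^2 + cT2 f^2 + cT3 f^2 + cT4 f^2
        = Real.sqrt (cT1 f^2 + cT3 f^2)^2 + Real.sqrt (cT2 f^2 + cT4 f^2)^2 by rw [hp2, hq2]; ring]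
    rw [← hδ, ← hα₁, ← hα₂]
    ring
  · -- upper bound
    rintro x ⟨α₁, α₂, β₁, β₂, rfl⟩
    rw [chsh_val_eq, Complex.ofReal_re]
    exact chsh_bound _ _ _ _ _ _ _ _

end
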